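/- arXiv:2211.01439 — 2 statements merged into one kernel-verified Lean document; each statement's English description precedes it below -/
import Mathlib

section
/- Let A be a countable subset of ℝ^d. Then there exists a lattice D in ℝ^d (i.e., a discrete cocompact subgroup, of the form c₁ℤe₁ ⊕ ⋯ ⊕ c_dℤe_d for nonzero reals cᵢ) such that D ∩ spanℚ(A) = {0} and D° ∩ spanℚ(A) = {0}, where D° = {x ∈ ℝ^d : ⟨v, x⟩ ∈ ℤ for all v ∈ D} is the dual lattice. -/
theorem stmt_1 (d : ℕ) (A : Set (Fin d → ℝ)) (hA : A.Countable) :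
    ∃ c : Fin d → ℝ, (∀ i, c i ≠ 0) ∧
      {x : Fin d → ℝ | ∀ i, ∃ n : ℤ, x i = n * c i} ∩
        (Submodule.span ℚ A : Set (Fin d → ℝ)) = {0} ∧
      {x : Fin d → ℝ | ∀ v : Fin d → ℝ, (∀ i, ∃ n : ℤ, v i = n * c i) →
          ∃ n : ℤ, (∑ i, v i * x i) = (n : ℝ)} ∩
        (Submodule.span ℚ A : Set (Fin d → ℝ)) = {0} := by
  classical
  -- the span is countable
  have hspan : (Submodule.span ℚ A : Set (Fin d → ℝ)).Countable := by
    haveI := hA.to_subtype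
    have h : Submodule.span ℚ A
        = LinearMap.range (Finsupp.linearCombination ℚ ((↑) : A → Fin d → ℝ)) := by
      rw [← Finsupp.span_eq_range_linearCombination]
    rw [h]
    exact Set.countable_range _
  -- the set of all coordinates of span elements
  set S : Set ℝ := ⋃ i : Fin d, (fun x : Fin d → ℝ => x i) '' (Submodule.span ℚ A : Set (Fin d → ℝ)) with hSdef
  have hS : S.Countable := Set.countable_iUnion fun i => hspan.image _
  set B : Set ℝ := {0} ∪ ⋃ s ∈ S, ⋃ n : ℤ, ({s / n, n / s} : Set ℝ) with hBdef
  have hB : B.Countable := by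
    refine (Set.countable_singleton 0).union ?_
    exact hS.biUnion fun s _ => Set.countable_iUnion fun n =>
      ((Set.countable_singleton _).insert _)
  obtain ⟨c0, hc0⟩ : ∃ c0 : ℝ, c0 ∉ B := by
    by_contra h
    push_neg at h
    exact Cardinal.not_countable_real (hB.mono fun x _ => h x)
  have hc0ne : c0 ≠ 0 := fun h => hc0 (Or.inl (by simp [h]))
  have key : ∀ (s : ℝ), s ∈ S → ∀ n : ℤ, c0 = s / n ∨ c0 = n / s → False := by
    intro s hs n hn
    apply hc0
    refine Or.inr ?_
    refine Set.mem_biUnion hs ?_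
    exact Set.mem_iUnion.2 ⟨n, by rcases hn with h | h <;> simp [h]⟩
  refine ⟨fun _ => c0, fun _ => hc0ne, ?_, ?_⟩
  · ext x
    simp only [Set.mem_inter_iff, Set.mem_setOf_eq, Set.mem_singleton_iff]
    constructor
    · rintro ⟨h1, h2⟩
      funext i
      show x i = 0
      obtain ⟨n, hn⟩ := h1 i
      have hxS : x i ∈ S := Set.mem_iUnion.2 ⟨i, ⟨x, h2, rfl⟩⟩
      by_contra hxi
      have hnne : (n : ℝ) ≠ 0 := by
        intro h0; apply hxi; rw [hn, h0, zero_mul]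
      exact key (x i) hxS n (Or.inl ((eq_div_iff hnne).2 (by rw [hn]; ring)))
    · rintro rfl
      exact ⟨fun i => ⟨0, by simp⟩, (Submodule.span ℚ A).zero_mem⟩
  · ext x
    simp only [Set.mem_inter_iff, Set.mem_setOf_eq, Set.mem_singleton_iff]
    constructor
    · rintro ⟨h1, h2⟩
      funext i
      show x i = 0
      have hxS : x i ∈ S := Set.mem_iUnion.2 ⟨i, ⟨x, h2, rfl⟩⟩
      by_contra hxi
      obtain ⟨n, hn⟩ := h1 (fun j => if j = i then c0 else 0)
        (fun j => by
          by_cases h : j = i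
          · exact ⟨1, by simp [h]⟩
          · exact ⟨0, by simp [h]⟩)
      have : (∑ j, (if j = i then c0 else 0) * x j) = c0 * x i := by
        rw [Finset.sum_eq_single i] <;> simp_all
      rw [this] at hn
      exact key (x i) hxS n (Or.inr ((eq_div_iff hxi).2 hn))
    · rintro rfl
      exact ⟨fun v _ => ⟨0, by simp⟩, (Submodule.span ℚ A).zero_mem⟩
end

section
/- Let H, H' be locally compact abelian groups, φ : H → H' a continuous group homomorphism with dense range, and let ν be the pushforward under φ of a Haar measure m_H on H, assumed to be a Radon measure on H'. Then ν is invariant under translation by every element of H', i.e., ν is H'-translation invariant (hence a Haar measure up to scaling, if nonzero and finite on compacts). -/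
open MeasureTheory

theorem stmt_15 {H H' : Type*}
    [AddCommGroup H] [TopologicalSpace H] [IsTopologicalAddGroup H] [LocallyCompactSpace H]
    [MeasurableSpace H] [BorelSpace H]
    [AddCommGroup H'] [TopologicalSpace H'] [IsTopologicalAddGroup H'] [LocallyCompactSpace H']
    [MeasurableSpace H'] [BorelSpace H']
    (φ : H →+ H') (hφc : Continuous φ) (hφd : DenseRange φ)
    (mH : Measure H) [mH.IsAddHaarMeasure]
    (ν : Measure H') (hν : ν = Measure.map φ mH) (hreg : ν.Regular) :
    ∀ y : H', Measure.map (fun x => y + x) ν = ν := by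
  -- invariance under translations by elements of the range of φ
  have hinv : ∀ h : H, Measure.map (fun x => φ h + x) ν = ν := by
    intro h
    rw [hν, Measure.map_map (measurable_const_add _) hφc.measurable]
    have hcomp : (fun x => φ h + x) ∘ φ = φ ∘ (fun x => h + x) := by
      ext x; simp [map_add]
    rw [hcomp, ← Measure.map_map hφc.measurable (measurable_const_add _),
      Measure.IsAddLeftInvariant.map_add_left_eq_self h]
  have hemb : ∀ a : H', MeasurableEmbedding (fun x => a + x) :=
    fun a => (Homeomorph.addLeft a).measurableEmbedding
  -- translation of any set by an element of the range of φ preserves ν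
  have hinvK : ∀ (h : H) (K : Set H'), ν ((fun x => φ h + x) '' K) = ν K := by
    intro h K
    rw [Set.image_add_left, ← map_neg φ h, ← (hemb (φ (-h))).map_apply, hinv (-h)]
  -- key inequality: ν K ≤ ν (y + K) for compact K
  have key : ∀ (y : H') (K : Set H'), IsCompact K →
      ν K ≤ ν ((fun x => y + x) '' K) := by
    intro y K hK
    have hyK : IsCompact ((fun x => y + x) '' K) := hK.image (continuous_add_left y)
    rw [Set.measure_eq_iInf_isOpen ((fun x => y + x) '' K) ν]
    refine le_iInf fun U => le_iInf fun hUK => le_iInf fun hU => ?_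
    obtain ⟨V, hV, hVU⟩ := compact_open_separated_add_left hyK hU hUK
    -- find g = φ h in y + V
    have hmem : (fun x => y + x) '' V ∈ nhds y := by
      have := (Homeomorph.addLeft y).isOpenMap.image_mem_nhds (x := (0 : H')) hV
      simpa using this
    have hy : y ∈ closure (Set.range φ) := hφd y
    rw [mem_closure_iff_nhds] at hy
    obtain ⟨g, hg1, hg2⟩ := hy _ hmem
    obtain ⟨v, hvV, hvg⟩ := hg1
    obtain ⟨h, rfl⟩ := hg2
    have hsub : (fun x => φ h + x) '' K ⊆ U := by
      rintro _ ⟨k, hk, rfl⟩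
      have hvg' : y + v = φ h := hvg
      show φ h + k ∈ U
      have : φ h + k = v + (y + k) := by rw [← hvg']; abel
      rw [this]
      exact hVU (Set.add_mem_add hvV ⟨k, hk, rfl⟩)
    calc ν K = ν ((fun x => φ h + x) '' K) := (hinvK h K).symm
      _ ≤ ν U := measure_mono hsub
  -- equality on compact sets
  have keyeq : ∀ (y : H') (K : Set H'), IsCompact K →
      ν ((fun x => y + x) '' K) = ν K := by
    intro y K hK
    refine le_antisymm ?_ (key y K hK)
    have h2 := key (-y) _ (hK.image (continuous_add_left y))
    have h3 : (fun x => -y + x) '' ((fun x => y + x) '' K) = K := by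
      rw [Set.image_image]; simp
    rwa [h3] at h2
  intro y
  haveI : (Measure.map (fun x => y + x) ν).Regular :=
    Measure.Regular.map (Homeomorph.addLeft y)
  -- equality on open sets
  have hopen : ∀ U : Set H', IsOpen U → Measure.map (fun x => y + x) ν U = ν U := by
    intro U hU
    rw [hU.measure_eq_iSup_isCompact, hU.measure_eq_iSup_isCompact]
    refine iSup_congr fun K => iSup_congr fun hKU => iSup_congr fun hK => ?_
    rw [(hemb y).map_apply,
      show (fun x => y + x) ⁻¹' K = (fun x => -y + x) '' K from by
        rw [Set.image_add_left, neg_neg], keyeq (-y) K hK]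
  refine Measure.ext fun s hs => ?_
  rw [Set.measure_eq_iInf_isOpen s (Measure.map (fun x => y + x) ν),
    Set.measure_eq_iInf_isOpen s ν]
  exact iInf_congr fun U => iInf_congr fun hsU => iInf_congr fun hU => hopen U hU
end
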